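/- Let p be a prime, let r, m, e be positive integers with e ≥ 2, and let d_{e−1},…,d_1 be positive integers; set d_0 := 0. Then the number of m-tuples α = (a_1,…,a_m) of natural numbers with a_1+⋯+a_m = r(p^e−1) and d_i(α) = d_i for every 1 ≤ i ≤ e−1 equals P_m(r(p−1)−d_{e−1}) · ∏_{i=0}^{e−2} M_{p,m}(r(p−1)+d_{i+1}·p−d_i). -/

import Mathlib

open Finset

/-- `Mpm p m i` is the number of `m`-tuples `(b_1,…,b_m)` of integers with
`0 ≤ b_j ≤ p−1` and `b_1+⋯+b_m = i`; it is the coefficient of `t^i` in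
`(1+t+⋯+t^{p−1})^m`. -/
def Mpm (p m : ℕ) (i : ℤ) : ℕ :=
  (Finset.univ.filter (fun b : Fin m → Fin p => (∑ j, ((b j : ℕ) : ℤ)) = i)).card


/-- `Pm m k = binom(k+m−1, m−1)` for `k ≥ 0`, and `0` for `k < 0`. -/
def Pm (m : ℕ) (k : ℤ) : ℕ :=
  if 0 ≤ k then (k.toNat + m - 1).choose (m - 1) else 0


/-- `dArr p r a i` is the integer `d_i(α) = ⌊((a_1 mod p^i)+⋯+(a_m mod p^i))/p^i⌋ − ⌊r(p^i−1)/p^i⌋`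
for `α = (a_1,…,a_m)`. -/
def dArr (p r : ℕ) {m : ℕ} (a : Fin m → ℕ) (i : ℕ) : ℤ :=
  (((∑ j, a j % p ^ i) / p ^ i : ℕ) : ℤ) - (((r * (p ^ i - 1)) / p ^ i : ℕ) : ℤ)


lemma pkp (p k : ℕ) (hp : 0 < p) : p ^ k * (p - 1) + p ^ k = p ^ k * p := by
  cases p with
  | zero => omega
  | succ q => simp [Nat.succ_sub_one]; ring

lemma modps (p : ℕ) (hp : 0 < p) (x k : ℕ) :
    x % p ^ (k + 1) = x % p ^ k + p ^ k * (x / p ^ k % p) := by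
  conv_lhs => rw [← Nat.div_add_mod x (p ^ k)]
  have hb : x % p ^ k + p ^ k * (x / p ^ k % p) < p ^ k * p := by
    have h1 := Nat.mod_lt x (pow_pos hp k)
    have h3 : p ^ k * (x / p ^ k % p) ≤ p ^ k * (p - 1) :=
      Nat.mul_le_mul_left _ (Nat.le_sub_one_of_lt (Nat.mod_lt _ hp))
    have h4 := pkp p k hp
    omega
  rw [pow_succ, Nat.add_comm, Nat.add_mod, Nat.mul_mod_mul_left,
    Nat.mod_eq_of_lt (a := x % p ^ k) (lt_of_lt_of_le (Nat.mod_lt _ (pow_pos hp k))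
      (Nat.le_mul_of_pos_right _ hp)), Nat.mod_eq_of_lt (by omega)]

lemma sum_digits (p : ℕ) (hp : 0 < p) (n x : ℕ) :
    x % p ^ n = ∑ k ∈ range n, x / p ^ k % p * p ^ k := by
  induction n with
  | zero => simp [Nat.mod_one]
  | succ n ih => rw [modps p hp, ih, Finset.sum_range_succ, Nat.mul_comm]

lemma digit_sum_lt (p : ℕ) (hp : 0 < p) (c : ℕ → ℕ) (hc : ∀ t, c t < p) (n : ℕ) :
    ∑ t ∈ range n, c t * p ^ t < p ^ n := by
  induction n with
  | zero => simp
  | succ n ih =>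
    rw [Finset.sum_range_succ, pow_succ]
    have h2 : c n * p ^ n ≤ (p - 1) * p ^ n :=
      Nat.mul_le_mul_right _ (Nat.le_sub_one_of_lt (hc n))
    have h3 := pkp p n hp
    have h4 : p ^ n * (p - 1) = (p - 1) * p ^ n := Nat.mul_comm _ _
    omega

lemma digit_head_mod (p : ℕ) (hp : 0 < p) (c : ℕ → ℕ) (hc : ∀ t, c t < p) (i n : ℕ)
    (hin : i ≤ n) :
    (∑ t ∈ range n, c t * p ^ t) % p ^ i = ∑ t ∈ range i, c t * p ^ t := by
  rw [show n = i + (n - i) by omega, Finset.sum_range_add]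
  obtain ⟨cc, hcc⟩ : p ^ i ∣ ∑ t ∈ range (n - i), c (i + t) * p ^ (i + t) :=
    Finset.dvd_sum fun t _ => Dvd.dvd.mul_left (pow_dvd_pow p (Nat.le_add_right _ _)) _
  rw [hcc, Nat.add_mul_mod_self_left, Nat.mod_eq_of_lt (digit_sum_lt p hp c hc i)]

lemma digit_extract (p : ℕ) (hp : 0 < p) (c : ℕ → ℕ) (hc : ∀ t, c t < p) (H n k : ℕ)
    (hk : k < n) :
    ((∑ t ∈ range n, c t * p ^ t) + H * p ^ n) / p ^ k % p = c k := by
  have h1 : ((∑ t ∈ range n, c t * p ^ t) + H * p ^ n) / p ^ k % p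
      = ((∑ t ∈ range n, c t * p ^ t) + H * p ^ n) % p ^ (k + 1) / p ^ k := by
    rw [modps p hp _ k]
    rw [Nat.add_mul_div_left _ _ (pow_pos hp k), Nat.div_eq_of_lt (Nat.mod_lt _ (pow_pos hp k))]
    omega
  rw [h1]
  have h2 : ((∑ t ∈ range n, c t * p ^ t) + H * p ^ n) % p ^ (k + 1)
      = (∑ t ∈ range n, c t * p ^ t) % p ^ (k + 1) := by
    have : p ^ (k+1) ∣ H * p ^ n := Dvd.dvd.mul_left (pow_dvd_pow p hk) _
    obtain ⟨cc, hcc⟩ := this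
    rw [hcc, Nat.add_mul_mod_self_left]
  rw [h2, digit_head_mod p hp c hc (k+1) n hk, Finset.sum_range_succ,
    Nat.add_mul_div_right _ _ (pow_pos hp k),
    Nat.div_eq_of_lt (digit_sum_lt p hp c hc k)]
  omega

lemma high_extract (p : ℕ) (hp : 0 < p) (c : ℕ → ℕ) (hc : ∀ t, c t < p) (H n : ℕ) :
    ((∑ t ∈ range n, c t * p ^ t) + H * p ^ n) / p ^ n = H := by
  rw [Nat.add_mul_div_right _ _ (pow_pos hp n),
    Nat.div_eq_of_lt (digit_sum_lt p hp c hc n)]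
  omega

lemma key_id (p r e i : ℕ) (hp : 0 < p) (hie : i ≤ e) :
    p ^ i * (r * (p ^ i - 1) / p ^ i) + r * (p ^ e - 1) % p ^ i = r * (p ^ i - 1) := by
  have hsplit : r * (p ^ e - 1) = r * (p ^ i - 1) + r * (p ^ (e - i) - 1) * p ^ i := by
    have h2 : p ^ i * p ^ (e - i) = p ^ e := by rw [← pow_add]; congr 1; omega
    have h3 : 1 ≤ p ^ i := pow_pos hp i
    have h4 : 1 ≤ p ^ (e - i) := pow_pos hp _
    have h5 : 1 ≤ p ^ e := pow_pos hp e
    zify [h3, h4, h5]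
    have h2' : (p:ℤ) ^ i * (p:ℤ) ^ (e - i) = (p:ℤ) ^ e := by exact_mod_cast h2
    nlinarith [h2']
  rw [hsplit, Nat.add_mul_mod_self_right]
  exact Nat.div_add_mod _ _

lemma cast_rp (p r i : ℕ) (hp : 0 < p) :
    ((r * (p ^ i - 1) : ℕ) : ℤ) = (r : ℤ) * ((p : ℤ) ^ i - 1) := by
  have h1 : 1 ≤ p ^ i := Nat.one_le_pow _ _ hp
  push_cast [h1]
  ring

lemma telescope (p : ℕ) (r : ℤ) (d : ℕ → ℤ) (hd0 : d 0 = 0) (i : ℕ) :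
    ∑ t ∈ range i, (p : ℤ) ^ t * (r * ((p : ℤ) - 1) + d (t + 1) * (p : ℤ) - d t)
      = r * ((p : ℤ) ^ i - 1) + (p : ℤ) ^ i * d i := by
  induction i with
  | zero => simp [hd0]
  | succ i ih => rw [Finset.sum_range_succ, ih]; ring

lemma fwd_S (p r e m : ℕ) (hp : 0 < p) (d : ℕ → ℤ) (hd0 : d 0 = 0) (a : Fin m → ℕ)
    (hsum : ∑ j, a j = r * (p ^ e - 1))
    (hdar : ∀ i, 1 ≤ i → i ≤ e - 1 → dArr p r a i = d i)
    (i : ℕ) (hi : i ≤ e - 1) :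
    ((∑ j, a j % p ^ i : ℕ) : ℤ) = (r : ℤ) * ((p : ℤ) ^ i - 1) + (p : ℤ) ^ i * d i := by
  rcases Nat.eq_zero_or_pos i with hi0 | hi1
  · subst hi0; simp [hd0, Nat.mod_one]
  · have hie : i ≤ e := by omega
    have hda := hdar i hi1 hi
    rw [dArr] at hda
    set S : ℕ := ∑ j, a j % p ^ i with hSdef
    have hmod : S % p ^ i = r * (p ^ e - 1) % p ^ i := by
      rw [← hsum, hSdef]
      conv_rhs => rw [Finset.sum_nat_mod]
    have hdm := Nat.div_add_mod S (p ^ i)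
    have hkey := key_id p r e i hp hie
    have hcast := cast_rp p r i hp
    -- combine over ℤ
    have h1 : (S : ℤ) = (p : ℤ) ^ i * ((S / p ^ i : ℕ) : ℤ) + ((S % p ^ i : ℕ) : ℤ) := by
      exact_mod_cast congrArg (Nat.cast : ℕ → ℤ) hdm.symm
    have h2 : ((S / p ^ i : ℕ) : ℤ) = d i + ((r * (p ^ i - 1) / p ^ i : ℕ) : ℤ) := by
      linarith [hda]
    have h3 : (p : ℤ) ^ i * ((r * (p ^ i - 1) / p ^ i : ℕ) : ℤ)
        + ((r * (p ^ e - 1) % p ^ i : ℕ) : ℤ) = ((r * (p ^ i - 1) : ℕ) : ℤ) := by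
      exact_mod_cast congrArg (Nat.cast : ℕ → ℤ) hkey
    have hmodc : ((S % p ^ i : ℕ) : ℤ) = ((r * (p ^ e - 1) % p ^ i : ℕ) : ℤ) :=
      congrArg _ hmod
    rw [h1, h2, hmodc]
    linear_combination h3 + hcast

lemma bwd_dArr (p r e i m : ℕ) (hp : 0 < p) (hie : i ≤ e) (di : ℤ) (hdi : 0 ≤ di)
    (a : Fin m → ℕ)
    (hS : ((∑ j, a j % p ^ i : ℕ) : ℤ) = (r : ℤ) * ((p : ℤ) ^ i - 1) + (p : ℤ) ^ i * di) :
    dArr p r a i = di := by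
  set S : ℕ := ∑ j, a j % p ^ i with hSdef
  set D : ℕ := r * (p ^ i - 1) / p ^ i with hDdef
  set ρ : ℕ := r * (p ^ e - 1) % p ^ i with hρdef
  have hkey : (p : ℤ) ^ i * (D : ℤ) + (ρ : ℤ) = ((r * (p ^ i - 1) : ℕ) : ℤ) := by
    exact_mod_cast congrArg (Nat.cast : ℕ → ℤ) (key_id p r e i hp hie)
  have ht : (0 : ℤ) ≤ (D : ℤ) + di := by positivity
  have hSnat : S = p ^ i * ((D : ℤ) + di).toNat + ρ := by
    have : (S : ℤ) = ((p ^ i * ((D : ℤ) + di).toNat + ρ : ℕ) : ℤ) := by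
      push_cast [Int.toNat_of_nonneg ht]
      rw [hS, ← cast_rp p r i hp]
      linear_combination -hkey
    exact_mod_cast this
  have hρlt : ρ < p ^ i := Nat.mod_lt _ (pow_pos hp i)
  have hdiv : S / p ^ i = ((D : ℤ) + di).toNat := by
    rw [hSnat, Nat.mul_add_div (pow_pos hp i), Nat.div_eq_of_lt hρlt]
    omega
  rw [dArr, ← hSdef, ← hDdef, hdiv, Int.toNat_of_nonneg ht]
  ring

lemma count_digit (p m : ℕ) (i : ℤ) :
    Nat.card {b : Fin m → Fin p // (∑ j, ((b j : ℕ) : ℤ)) = i} = Mpm p m i := by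
  rw [Nat.card_eq_fintype_card, Mpm]
  convert Fintype.card_subtype _

lemma count_h (m : ℕ) (hm : 0 < m) (K : ℤ) :
    Nat.card {h : Fin m → ℕ // (∑ j, ((h j : ℕ) : ℤ)) = K} = Pm m K := by
  by_cases hK : 0 ≤ K
  · have e1 : {h : Fin m → ℕ // (∑ j, ((h j : ℕ) : ℤ)) = K}
        ≃ {h : Fin m → ℕ // (∑ j, h j) = K.toNat} := by
      apply Equiv.subtypeEquivRight
      intro h
      rw [← Nat.cast_inj (R := ℤ)]
      push_cast
      rw [Int.toNat_of_nonneg hK]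
    rw [Nat.card_congr e1, Nat.card_congr (Sym.equivNatSumOfFintype (Fin m) K.toNat).symm,
      Nat.card_eq_fintype_card, Sym.card_sym_eq_choose, Fintype.card_fin, Pm, if_pos hK]
    have h1 : K.toNat ≤ K.toNat + m - 1 := by omega
    have := Nat.choose_symm h1
    rw [show K.toNat + m - 1 - K.toNat = m - 1 by omega] at this
    rw [this, show m + K.toNat - 1 = K.toNat + m - 1 by omega]
  · have : IsEmpty {h : Fin m → ℕ // (∑ j, ((h j : ℕ) : ℤ)) = K} := by
      constructor
      rintro ⟨h, hh⟩
      apply hK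
      rw [← hh]
      positivity
    rw [Nat.card_of_isEmpty, Pm, if_neg hK]

/-- digits of a reconstructed tuple -/
def dig (p : ℕ) {m E : ℕ} (b : Fin E → Fin m → Fin p) (j : Fin m) (t : ℕ) : ℕ :=
  if ht : t < E then (b ⟨t, ht⟩ j : ℕ) else 0

def abuild (p : ℕ) {m : ℕ} (E : ℕ) (b : Fin E → Fin m → Fin p) (h : Fin m → ℕ) :
    Fin m → ℕ :=
  fun j => (∑ t ∈ range E, dig p b j t * p ^ t) + h j * p ^ E

lemma dig_lt (p : ℕ) {m E : ℕ} (hp : 0 < p) (b : Fin E → Fin m → Fin p) (j : Fin m)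
    (t : ℕ) : dig p b j t < p := by
  unfold dig; split
  · exact (b _ j).2
  · exact hp

lemma fwd_props (p r m e : ℕ) (hp0 : 0 < p) (he : 2 ≤ e) (d : ℕ → ℤ) (hd0 : d 0 = 0)
    (a : Fin m → ℕ) (ha1 : ∑ j, a j = r * (p ^ e - 1))
    (ha2 : ∀ i, 1 ≤ i → i ≤ e - 1 → dArr p r a i = d i) :
    (∀ k, k < e - 1 → (∑ j, ((a j / p ^ k % p : ℕ) : ℤ))
        = (r : ℤ) * ((p : ℤ) - 1) + d (k + 1) * (p : ℤ) - d k)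
    ∧ (∑ j, ((a j / p ^ (e - 1) : ℕ) : ℤ)) = (r : ℤ) * ((p : ℤ) - 1) - d (e - 1) := by
  have hS := fwd_S p r e m hp0 d hd0 a ha1 ha2
  constructor
  · intro k hk
    have hsplit : (∑ j, a j % p ^ (k + 1))
        = (∑ j, a j % p ^ k) + p ^ k * ∑ j, (a j / p ^ k % p) := by
      rw [Finset.mul_sum, ← Finset.sum_add_distrib]
      exact Finset.sum_congr rfl fun j _ => modps p hp0 (a j) k
    have h1 := hS (k + 1) (by omega)
    have h2 := hS k (by omega)
    have h3 : ((∑ j, a j % p ^ (k + 1) : ℕ) : ℤ)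
        = ((∑ j, a j % p ^ k : ℕ) : ℤ)
          + (p : ℤ) ^ k * (∑ j, ((a j / p ^ k % p : ℕ) : ℤ)) := by
      exact_mod_cast hsplit
    have hpk : ((p : ℤ)) ^ k ≠ 0 := by positivity
    apply mul_left_cancel₀ hpk
    linear_combination h1 - h2 - h3
  · have hsplit : (∑ j, a j)
        = (∑ j, a j % p ^ (e - 1)) + p ^ (e - 1) * ∑ j, (a j / p ^ (e - 1)) := by
      rw [Finset.mul_sum, ← Finset.sum_add_distrib]
      exact Finset.sum_congr rfl fun j _ => (Nat.mod_add_div (a j) (p ^ (e - 1))).symm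
    rw [ha1] at hsplit
    have h4 : ((r * (p ^ e - 1) : ℕ) : ℤ)
        = ((∑ j, a j % p ^ (e - 1) : ℕ) : ℤ)
          + (p : ℤ) ^ (e - 1) * (∑ j, ((a j / p ^ (e - 1) : ℕ) : ℤ)) := by
      exact_mod_cast hsplit
    have h1 := hS (e - 1) le_rfl
    have hcast := cast_rp p r e hp0
    have hpe : (p : ℤ) ^ e = (p : ℤ) ^ (e - 1) * p := by
      rw [← pow_succ]; congr 1; omega
    have hpk : ((p : ℤ)) ^ (e - 1) ≠ 0 := by positivity
    apply mul_left_cancel₀ hpk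
    linear_combination -h4 + hcast - h1 + (r : ℤ) * hpe
  
lemma bwd_props (p r m e : ℕ) (hp0 : 0 < p) (he : 2 ≤ e) (d : ℕ → ℤ) (hd0 : d 0 = 0)
    (hdpos : ∀ i, 1 ≤ i → i ≤ e - 1 → 1 ≤ d i)
    (b : Fin (e - 1) → Fin m → Fin p) (h : Fin m → ℕ)
    (hb : ∀ k : Fin (e - 1), (∑ j, ((b k j : ℕ) : ℤ))
        = (r : ℤ) * ((p : ℤ) - 1) + d ((k : ℕ) + 1) * (p : ℤ) - d (k : ℕ))
    (hh : (∑ j, ((h j : ℕ) : ℤ)) = (r : ℤ) * ((p : ℤ) - 1) - d (e - 1)) :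
    (∑ j, abuild p (e - 1) b h j = r * (p ^ e - 1)) ∧
      ∀ i, 1 ≤ i → i ≤ e - 1 → dArr p r (abuild p (e - 1) b h) i = d i := by
  have hamod : ∀ i, i ≤ e - 1 → ∀ j, abuild p (e - 1) b h j % p ^ i
      = ∑ t ∈ range i, dig p b j t * p ^ t := by
    intro i hi j
    unfold abuild
    obtain ⟨q, hq⟩ : p ^ i ∣ h j * p ^ (e - 1) :=
      Dvd.dvd.mul_left (pow_dvd_pow p hi) _
    rw [hq, Nat.add_mul_mod_self_left]
    exact digit_head_mod p hp0 _ (dig_lt p hp0 b j) i (e - 1) hi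
  have hSi : ∀ i, i ≤ e - 1 → ((∑ j, abuild p (e - 1) b h j % p ^ i : ℕ) : ℤ)
      = (r : ℤ) * ((p : ℤ) ^ i - 1) + (p : ℤ) ^ i * d i := by
    intro i hi
    have h1 : (∑ j, abuild p (e - 1) b h j % p ^ i)
        = ∑ t ∈ range i, (∑ j, dig p b j t) * p ^ t := by
      rw [Finset.sum_congr rfl fun j _ => hamod i hi j, Finset.sum_comm]
      exact Finset.sum_congr rfl fun t _ => (Finset.sum_mul _ _ _).symm
    have h2 : ∀ t, t < i → ((∑ j, dig p b j t : ℕ) : ℤ)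
        = (r : ℤ) * ((p : ℤ) - 1) + d (t + 1) * (p : ℤ) - d t := by
      intro t ht
      have htE : t < e - 1 := lt_of_lt_of_le ht hi
      have hbt := hb ⟨t, htE⟩
      have : (∑ j, dig p b j t) = ∑ j, (b ⟨t, htE⟩ j : ℕ) :=
        Finset.sum_congr rfl fun j _ => by simp [dig, htE]
      rw [this]
      rw [← hbt]
      push_cast
      rfl
    calc ((∑ j, abuild p (e - 1) b h j % p ^ i : ℕ) : ℤ)
        = ∑ t ∈ range i, ((∑ j, dig p b j t : ℕ) : ℤ) * (p : ℤ) ^ t := by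
          rw [h1]; push_cast; rfl
      _ = ∑ t ∈ range i, (p : ℤ) ^ t
            * ((r : ℤ) * ((p : ℤ) - 1) + d (t + 1) * (p : ℤ) - d t) := by
          refine Finset.sum_congr rfl fun t ht => ?_
          rw [h2 t (Finset.mem_range.mp ht)]; ring
      _ = (r : ℤ) * ((p : ℤ) ^ i - 1) + (p : ℤ) ^ i * d i := telescope p r d hd0 i
  constructor
  · have hsplit : (∑ j, abuild p (e - 1) b h j)
        = (∑ j, abuild p (e - 1) b h j % p ^ (e - 1)) + p ^ (e - 1) * ∑ j, h j := by
      rw [Finset.mul_sum, ← Finset.sum_add_distrib]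
      refine Finset.sum_congr rfl fun j _ => ?_
      conv_lhs => rw [← Nat.mod_add_div (abuild p (e - 1) b h j) (p ^ (e - 1))]
      congr 1
      congr 1
      unfold abuild
      exact high_extract p hp0 _ (dig_lt p hp0 b j) (h j) (e - 1)
    have h4 : ((∑ j, abuild p (e - 1) b h j : ℕ) : ℤ)
        = ((∑ j, abuild p (e - 1) b h j % p ^ (e - 1) : ℕ) : ℤ)
          + (p : ℤ) ^ (e - 1) * (∑ j, ((h j : ℕ) : ℤ)) := by
      exact_mod_cast hsplit
    have h1 := hSi (e - 1) le_rfl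
    have hcast := cast_rp p r e hp0
    have hpe : (p : ℤ) ^ e = (p : ℤ) ^ (e - 1) * p := by
      rw [← pow_succ]; congr 1; omega
    have : ((∑ j, abuild p (e - 1) b h j : ℕ) : ℤ) = ((r * (p ^ e - 1) : ℕ) : ℤ) := by
      rw [h4, h1, hh, hcast, hpe]; ring
    exact_mod_cast this
  · intro i h1i hiE
    exact bwd_dArr p r e i m hp0 (by omega) (d i)
      (le_trans zero_le_one (hdpos i h1i hiE)) _ (hSi i hiE)

lemma main_card (p r m e : ℕ) (hp0 : 0 < p) (he : 2 ≤ e)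
    (d : ℕ → ℤ) (hd0 : d 0 = 0) (hdpos : ∀ i, 1 ≤ i → i ≤ e - 1 → 1 ≤ d i) :
    Nat.card {a : Fin m → ℕ // (∑ j, a j = r * (p ^ e - 1)) ∧
        ∀ i, 1 ≤ i → i ≤ e - 1 → dArr p r a i = d i} =
    Nat.card {x : (Fin (e - 1) → Fin m → Fin p) × (Fin m → ℕ) //
        (∀ k : Fin (e - 1), (∑ j, ((x.1 k j : ℕ) : ℤ))
            = (r : ℤ) * ((p : ℤ) - 1) + d ((k : ℕ) + 1) * (p : ℤ) - d (k : ℕ))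
        ∧ (∑ j, ((x.2 j : ℕ) : ℤ)) = (r : ℤ) * ((p : ℤ) - 1) - d (e - 1)} := by
  apply Nat.card_congr
  refine
    { toFun := fun a =>
        ⟨(fun k j => ⟨a.1 j / p ^ (k : ℕ) % p, Nat.mod_lt _ hp0⟩,
          fun j => a.1 j / p ^ (e - 1)), ?_⟩
      invFun := fun x => ⟨abuild p (e - 1) x.1.1 x.1.2, ?_⟩
      left_inv := ?_
      right_inv := ?_ }
  · obtain ⟨ha1, ha2⟩ := a.2
    have H := fwd_props p r m e hp0 he d hd0 a.1 ha1 ha2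
    exact ⟨fun k => by simpa using H.1 (k : ℕ) k.2, H.2⟩
  · exact bwd_props p r m e hp0 he d hd0 hdpos x.1.1 x.1.2 x.2.1 x.2.2
  · intro a
    apply Subtype.ext
    funext j
    show abuild p (e - 1) _ _ j = a.1 j
    unfold abuild
    have h1 : ∑ t ∈ range (e - 1),
        dig p (m := m) (E := e - 1)
          (fun k j => (⟨a.1 j / p ^ (k : ℕ) % p, Nat.mod_lt _ hp0⟩ : Fin p)) j t * p ^ t
        = ∑ t ∈ range (e - 1), a.1 j / p ^ t % p * p ^ t := by
      refine Finset.sum_congr rfl fun t ht => ?_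
      simp [dig, Finset.mem_range.mp ht]
    rw [h1, ← sum_digits p hp0 (e - 1) (a.1 j), Nat.mod_add_div']
  · rintro ⟨⟨b, h⟩, hx⟩
    apply Subtype.ext
    refine Prod.ext (funext fun k => funext fun j => Fin.ext ?_) (funext fun j => ?_)
    · show abuild p (e - 1) b h j / p ^ (k : ℕ) % p = (b k j : ℕ)
      unfold abuild
      rw [digit_extract p hp0 _ (dig_lt p hp0 b j) (h j) (e - 1) (k : ℕ) k.2]
      simp [dig, k.isLt]
    · show abuild p (e - 1) b h j / p ^ (e - 1) = h j
      unfold abuild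
      exact high_extract p hp0 _ (dig_lt p hp0 b j) (h j) (e - 1)

lemma cardB (p r m e : ℕ) (hm : 0 < m) (d : ℕ → ℤ) :
    Nat.card {x : (Fin (e - 1) → Fin m → Fin p) × (Fin m → ℕ) //
        (∀ k : Fin (e - 1), (∑ j, ((x.1 k j : ℕ) : ℤ))
            = (r : ℤ) * ((p : ℤ) - 1) + d ((k : ℕ) + 1) * (p : ℤ) - d (k : ℕ))
        ∧ (∑ j, ((x.2 j : ℕ) : ℤ)) = (r : ℤ) * ((p : ℤ) - 1) - d (e - 1)}
    = Pm m ((r : ℤ) * ((p : ℤ) - 1) - d (e - 1)) *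
        ∏ i ∈ Finset.range (e - 1),
          Mpm p m ((r : ℤ) * ((p : ℤ) - 1) + d (i + 1) * (p : ℤ) - d i) := by
  rw [Nat.card_congr (Equiv.subtypeProdEquivProd
      (p := fun y : Fin (e - 1) → Fin m → Fin p => ∀ k : Fin (e - 1),
        (∑ j, ((y k j : ℕ) : ℤ)) = (r : ℤ) * ((p : ℤ) - 1) + d ((k : ℕ) + 1) * (p : ℤ) - d (k : ℕ))
      (q := fun z : Fin m → ℕ =>
        (∑ j, ((z j : ℕ) : ℤ)) = (r : ℤ) * ((p : ℤ) - 1) - d (e - 1))),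
    Nat.card_prod,
    Nat.card_congr (Equiv.subtypePiEquivPi
      (p := fun (k : Fin (e - 1)) (y : Fin m → Fin p) =>
        (∑ j, ((y j : ℕ) : ℤ)) = (r : ℤ) * ((p : ℤ) - 1) + d ((k : ℕ) + 1) * (p : ℤ) - d (k : ℕ))),
    Nat.card_pi, count_h m hm, mul_comm]
  congr 1
  rw [← Fin.prod_univ_eq_prod_range]
  exact Finset.prod_congr rfl fun k _ => count_digit p m _

theorem stmt_6 (p r m e : ℕ) (hp : p.Prime) (hr : 0 < r) (hm : 0 < m)
    (he : 2 ≤ e) (d : ℕ → ℤ) (hd0 : d 0 = 0)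
    (hdpos : ∀ i, 1 ≤ i → i ≤ e - 1 → 1 ≤ d i) :
    Nat.card {a : Fin m → ℕ // (∑ j, a j = r * (p ^ e - 1)) ∧
        ∀ i, 1 ≤ i → i ≤ e - 1 → dArr p r a i = d i} =
      Pm m ((r : ℤ) * (p - 1) - d (e - 1)) *
        ∏ i ∈ Finset.range (e - 1),
          Mpm p m ((r : ℤ) * (p - 1) + d (i + 1) * p - d i) := by
  rw [main_card p r m e hp.pos he d hd0 hdpos, cardB p r m e hm d]
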